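/- Let l ≥ 1 and let (C_k, ∂_k)_{k≥0} be a chain complex of finite-dimensional 𝔽₂-vector spaces with C_k = 0 for k > l, whose homology satisfies H₀ ≅ 𝔽₂ and H_k = 0 for 1 ≤ k ≤ l. Suppose dim C_k is odd for k = l and even for every k ≠ l with 0 ≤ k ≤ l. Then dim(Ker ∂_k) is odd (in particular Ker ∂_k ≠ 0, hence C_k ≠ 0) for every 0 < k < l. -/
import Mathlib


/-- parity argument in the Morse complex.  Given a chain complex
`(C_k, ∂_k)` of finite-dimensional `𝔽₂`-vector spaces with `C_k = 0` for `k > l`,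
`H₀ ≅ 𝔽₂`, `H_k = 0` for `1 ≤ k ≤ l`, `dim C_l` odd and `dim C_k` even for
`k ≠ l`, `0 ≤ k ≤ l`, then `Ker ∂_k` is odd-dimensional (hence nonzero) for all
`0 < k < l`.  Here `d m : C (m+1) → C m` denotes `∂_{m+1}`, so `∂_k = d (k-1)`. -/
theorem morse_complex_parity (l : ℕ) (hl : 1 ≤ l)
    (C : ℕ → Type) [∀ k, AddCommGroup (C k)] [∀ k, Module (ZMod 2) (C k)]
    [∀ k, FiniteDimensional (ZMod 2) (C k)]
    (d : ∀ m : ℕ, C (m + 1) →ₗ[ZMod 2] C m)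
    (hcomplex : ∀ m : ℕ, (d m).comp (d (m + 1)) = 0)
    (htop : ∀ k : ℕ, l < k → Module.finrank (ZMod 2) (C k) = 0)
    (hH0 : Module.finrank (ZMod 2) (C 0 ⧸ LinearMap.range (d 0)) = 1)
    (hHk : ∀ m : ℕ, m + 1 ≤ l → LinearMap.ker (d m) = LinearMap.range (d (m + 1)))
    (hodd : Odd (Module.finrank (ZMod 2) (C l)))
    (heven : ∀ k : ℕ, k ≤ l → k ≠ l → Even (Module.finrank (ZMod 2) (C k))) :
    ∀ m : ℕ, m + 1 < l → Odd (Module.finrank (ZMod 2) (LinearMap.ker (d m))) := by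
  have key : ∀ m : ℕ, m < l → Odd (Module.finrank (ZMod 2) (LinearMap.range (d m))) := by
    intro m
    induction m with
    | zero =>
      intro _
      have hq := Submodule.finrank_quotient_add_finrank (LinearMap.range (d 0))
      rw [hH0] at hq
      have h0 : Even (Module.finrank (ZMod 2) (C 0)) := heven 0 (by omega) (by omega)
      rw [Nat.even_iff] at h0
      rw [Nat.odd_iff]
      omega
    | succ n ih =>
      intro hn
      have hr := ih (by omega)
      have hrn := LinearMap.finrank_range_add_finrank_ker (d n)
      rw [hHk n (by omega)] at hrn
      have he : Even (Module.finrank (ZMod 2) (C (n + 1))) :=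
        heven (n + 1) (by omega) (by omega)
      rw [Nat.even_iff] at he
      rw [Nat.odd_iff] at hr ⊢
      omega
  intro m hm
  rw [hHk m (by omega)]
  exact key (m + 1) hm
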